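/- Let d(r,n,k) be the number of colored permutations π ∈ G_{r,n} with exc_A(π) = k. Then d(r,n,k) = (n−k)·d(r,n−1,k−1) + (k+1+(r−1)(n−k))·d(r,n−1,k) + (k+1)(r−1)·d(r,n−1,k+1). -/

import Mathlib

open Finset Polynomial

/-- The group of colored permutations `G_{r,n} = Z_r ≀ S_n`, realized as bijections of the
colored alphabet `Σ = [n] × {0,…,r-1}` commuting with the color shift. -/
def ColoredPerm (r n : ℕ) [NeZero r] : Type :=
  {π : Equiv.Perm (Fin n × Fin r) //
    ∀ x : Fin n × Fin r, π (x.1, x.2 + 1) = ((π x).1, (π x).2 + 1)}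

/-- The color order on the colored alphabet:
`1^[r-1] < ⋯ < n^[r-1] < ⋯ < 1^[0] < ⋯ < n^[0]` (higher color is smaller). -/
def colorLt {r n : ℕ} (x y : Fin n × Fin r) : Prop :=
  y.2 < x.2 ∨ (x.2 = y.2 ∧ x.1 < y.1)

/-- The excedance number `exc` of a colored permutation. -/
noncomputable def cExc {r n : ℕ} [NeZero r] (π : ColoredPerm r n) : ℕ :=
  Nat.card {x : Fin n × Fin r // colorLt x (π.1 x)}

/-- `exc_A(π) = |{i ∈ [n-1] : π(i) > i}|` (positions are the color-0 letters,
and `i ∈ [n-1]` corresponds to `i.val + 1 < n`). -/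
noncomputable def cExcA {r n : ℕ} [NeZero r] (π : ColoredPerm r n) : ℕ :=
  Nat.card {i : Fin n // i.val + 1 < n ∧ colorLt (i, 0) (π.1 (i, 0))}

/-- `csum(π)`: the sum of the colors appearing in the window notation of `π`. -/
def csum {r n : ℕ} [NeZero r] (π : ColoredPerm r n) : ℕ :=
  ∑ i : Fin n, (π.1 (i, 0)).2.val

/-- `d(r,n,k)`: the number of colored permutations `π ∈ G_{r,n}` with `exc_A(π) = k`.
The index `k` ranges over `ℤ`, so counts vanish for negative `k`. -/
noncomputable def dG (r n : ℕ) [NeZero r] (k : ℤ) : ℕ :=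
  Nat.card {π : ColoredPerm r n // (cExcA π : ℤ) = k}

section Aux
open Equiv
variable {r m : ℕ} [NeZero r]

section Equiv
variable {r n : ℕ} [NeZero r]

open Fin.NatCast in
lemma cp_apply_nat (π : ColoredPerm r n) (i : Fin n) (m : ℕ) :
    π.1 (i, (m : Fin r)) = ((π.1 (i, 0)).1, (π.1 (i, 0)).2 + (m : Fin r)) := by
  induction m with
  | zero => simp
  | succ m ih =>
      have : ((m + 1 : ℕ) : Fin r) = (m : Fin r) + 1 := by push_cast; ring
      simpa [this, ih, add_assoc] using π.2 (i, (m : Fin r))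

open Fin.NatCast in
lemma cp_apply (π : ColoredPerm r n) (i : Fin n) (t : Fin r) :
    π.1 (i, t) = ((π.1 (i, 0)).1, (π.1 (i, 0)).2 + t) := by
  have := cp_apply_nat π i t.val
  rwa [Fin.cast_val_eq_self] at this

/-- Build a colored permutation from window data. -/
def mkCP (σ : Equiv.Perm (Fin n)) (c : Fin n → Fin r) : ColoredPerm r n :=
  ⟨{ toFun := fun x => (σ x.1, c x.1 + x.2)
     invFun := fun y => (σ.symm y.1, y.2 - c (σ.symm y.1))
     left_inv := fun x => by simp
     right_inv := fun y => by simp },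
   fun x => by simp [add_assoc]⟩

lemma mk_perm_inj (π : ColoredPerm r n) :
    Function.Injective (fun i => (π.1 (i, 0)).1) := by
  intro i j h
  have h2 : π.1 (j, (π.1 (i,0)).2 - (π.1 (j,0)).2) = π.1 (i, 0) := by
    rw [cp_apply]
    simp only [← h]
    ext <;> simp
  have := π.1.injective h2
  exact (Prod.mk.injEq _ _ _ _ ▸ this).1.symm

/-- The window-notation equivalence. -/
noncomputable def cpEquiv : ColoredPerm r n ≃ Equiv.Perm (Fin n) × (Fin n → Fin r) where
  toFun π := (Equiv.ofBijective _ ((Finite.injective_iff_bijective).mp (mk_perm_inj π)),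
    fun i => (π.1 (i, 0)).2)
  invFun sc := mkCP sc.1 sc.2
  left_inv π := by
    apply Subtype.ext
    apply Equiv.ext
    rintro ⟨i, t⟩
    simp [mkCP, cp_apply π i t, Equiv.ofBijective]
  right_inv sc := by
    obtain ⟨σ, c⟩ := sc
    refine Prod.ext ?_ ?_
    · apply Equiv.ext; intro i
      simp [mkCP, Equiv.ofBijective]
    · funext i; simp [mkCP]

end Equiv

def statf {r n : ℕ} [NeZero r] (sc : Equiv.Perm (Fin n) × (Fin n → Fin r)) : ℕ :=
  #(univ.filter fun i => sc.2 i = 0 ∧ i < sc.1 i)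

section Count
variable {r n : ℕ} [NeZero r]

lemma cExcA_mkCP (sc : Equiv.Perm (Fin n) × (Fin n → Fin r)) :
    cExcA (cpEquiv.symm sc) = statf sc := by
  classical
  rw [cExcA, Nat.card_eq_fintype_card, Fintype.card_subtype, statf]
  refine congrArg Finset.card ?_
  ext i
  have happ : ((cpEquiv.symm sc : ColoredPerm r n)).1 (i, 0) = (sc.1 i, sc.2 i) := by
    show (mkCP sc.1 sc.2).1 (i, 0) = _
    simp [mkCP]
  simp only [mem_filter, mem_univ, true_and]
  simp only [happ, colorLt]
  constructor
  · rintro ⟨-, h⟩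
    rcases h with h | ⟨h0, hlt⟩
    · exact absurd h (by simp [Fin.lt_def])
    · exact ⟨h0.symm, hlt⟩
  · rintro ⟨h0, hlt⟩
    exact ⟨lt_of_le_of_lt (Nat.succ_le_of_lt hlt) (sc.1 i).isLt, Or.inr ⟨h0.symm, hlt⟩⟩

lemma dG_eq_card (k : ℤ) :
    dG r n k = #(univ.filter fun sc : Equiv.Perm (Fin n) × (Fin n → Fin r) =>
      ((statf sc : ℕ) : ℤ) = k) := by
  classical
  rw [dG]
  have hA : ∀ π : ColoredPerm r n, cExcA π = statf (cpEquiv π) := by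
    intro π
    conv_lhs => rw [← cpEquiv.symm_apply_apply π]
    exact cExcA_mkCP (cpEquiv π)
  rw [Nat.card_congr (Equiv.subtypeEquiv (q := fun sc => ((statf sc : ℕ) : ℤ) = k) (cpEquiv (r := r) (n := n))
    (fun π => by rw [hA π]))]
  rw [Nat.card_eq_fintype_card, Fintype.card_subtype]

end Count

/-- Excedance-with-color-0 condition at the preimage of `p`. -/
def Ecur {r m : ℕ} [NeZero r] (τ : Equiv.Perm (Fin m)) (c' : Fin m → Fin r) (p : Fin (m + 1)) : Prop :=
  ∃ i : Fin m, (τ i).succ = p ∧ c' i = 0 ∧ i < τ i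

instance (τ : Equiv.Perm (Fin m)) (c' : Fin m → Fin r) (p : Fin (m + 1)) :
    Decidable (Ecur τ c' p) := by unfold Ecur; exact Fintype.decidableExistsFintype

lemma key_stat (τ : Equiv.Perm (Fin m)) (c' : Fin m → Fin r) (p : Fin (m + 1)) (d : Fin r) :
    statf (Equiv.Perm.decomposeFin.symm (p, τ), (Fin.cons d c' : Fin (m+1) → Fin r))
      + (if Ecur τ c' p then 1 else 0)
    = statf (τ, c') + (if p ≠ 0 ∧ d = 0 then 1 else 0) := by
  classical
  rw [statf, statf, Finset.card_filter, Finset.card_filter, Fin.sum_univ_succ]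
  have h0 : ((if (Fin.cons d c' : Fin (m+1) → Fin r) (0 : Fin (m+1)) = 0 ∧
      (0 : Fin (m+1)) < Equiv.Perm.decomposeFin.symm (p, τ) 0 then 1 else 0) : ℕ)
      = if p ≠ 0 ∧ d = 0 then 1 else 0 := by
    rw [Fin.cons_zero, Equiv.Perm.decomposeFin_symm_apply_zero]
    congr 1
    simp [Fin.pos_iff_ne_zero, and_comm]
  rw [h0]
  have hsucc : ∀ i : Fin m,
      ((if (Fin.cons d c' : Fin (m+1) → Fin r) i.succ = 0 ∧
        i.succ < Equiv.Perm.decomposeFin.symm (p, τ) i.succ then 1 else 0) : ℕ)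
      = if (τ i).succ = p then 0 else (if c' i = 0 ∧ i < τ i then 1 else 0) := by
    intro i
    rw [Fin.cons_succ, Equiv.Perm.decomposeFin_symm_apply_succ]
    by_cases h : (τ i).succ = p
    · rw [if_pos h, h, Equiv.swap_apply_right]
      simp [Fin.not_lt_zero]
    · rw [if_neg h, Equiv.swap_apply_of_ne_of_ne (Fin.succ_ne_zero _) h]
      congr 1
      simp [Fin.succ_lt_succ_iff]
  rw [Finset.sum_congr rfl (fun i _ => hsucc i)]
  -- now handle the hit
  by_cases hE : ∃ i : Fin m, (τ i).succ = p
  · obtain ⟨i₀, hi₀⟩ := hE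
    have huniq : ∀ i : Fin m, (τ i).succ = p ↔ i = i₀ := by
      intro i
      constructor
      · intro h
        exact τ.injective (Fin.succ_injective _ (h.trans hi₀.symm))
      · rintro rfl; exact hi₀
    have hEiff : Ecur τ c' p ↔ (c' i₀ = 0 ∧ i₀ < τ i₀) := by
      constructor
      · rintro ⟨i, h1, h2⟩
        rwa [huniq i |>.mp h1] at h2
      · intro h; exact ⟨i₀, hi₀, h⟩
    simp only [huniq]
    rw [if_congr hEiff rfl rfl]
    have h1 : ∑ x : Fin m, (if x = i₀ then 0 else if c' x = 0 ∧ x < τ x then (1:ℕ) else 0)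
        = ∑ x ∈ univ.erase i₀, (if c' x = 0 ∧ x < τ x then (1:ℕ) else 0) := by
      rw [← Finset.add_sum_erase univ
        (fun x => if x = i₀ then 0 else if c' x = 0 ∧ x < τ x then (1:ℕ) else 0)
        (Finset.mem_univ i₀), if_pos rfl, zero_add]
      exact Finset.sum_congr rfl (fun x hx => if_neg (Finset.mem_erase.mp hx).1)
    rw [h1, ← Finset.add_sum_erase univ
      (fun x => if c' x = 0 ∧ x < τ x then (1:ℕ) else 0) (Finset.mem_univ i₀)]
    ring
  · push_neg at hE
    have : ¬ Ecur τ c' p := by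
      rintro ⟨i, h1, -⟩; exact hE i h1
    rw [if_neg this]
    rw [Finset.sum_congr rfl (fun i _ => if_neg (hE i))]
    exact (add_zero _).trans (add_comm _ _)

lemma cardE (τ : Equiv.Perm (Fin m)) (c' : Fin m → Fin r) :
    #(univ.filter fun p : Fin (m+1) => Ecur τ c' p) = statf (τ, c') := by
  classical
  rw [statf]
  symm
  apply Finset.card_bij (fun i _ => (τ i).succ)
  · intro i hi
    simp only [Finset.mem_filter, Finset.mem_univ, true_and] at hi ⊢
    exact ⟨i, rfl, hi.1, hi.2⟩
  · intro a _ b _ h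
    exact τ.injective (Fin.succ_injective _ h)
  · intro p hp
    simp only [Finset.mem_filter, Finset.mem_univ, true_and] at hp
    simp only [Ecur] at hp
    obtain ⟨i, h1, h2, h3⟩ := hp
    exact ⟨i, by simp only [Finset.mem_filter, Finset.mem_univ, true_and]; exact ⟨h2, h3⟩, h1⟩

lemma sum_d (a b : ℤ) : ∑ d : Fin r, (if d = (0 : Fin r) then a else b) = a + ((r : ℤ) - 1) * b := by
  classical
  rw [Finset.sum_ite, Finset.sum_const, Finset.sum_const]
  rw [Finset.filter_eq' univ (0 : Fin r), if_pos (Finset.mem_univ _)]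
  have : Finset.filter (fun d => ¬ d = (0:Fin r)) univ = univ.erase 0 := by
    ext x; simp [Finset.mem_erase, and_comm]
  rw [this, Finset.card_erase_of_mem (Finset.mem_univ _)]
  simp only [Finset.card_singleton, one_smul, Finset.card_univ, Fintype.card_fin, nsmul_eq_mul]
  have h1 : (1:ℕ) ≤ r := NeZero.one_le
  push_cast [Nat.cast_sub h1]
  ring

lemma Ecur_ne_zero {τ : Equiv.Perm (Fin m)} {c' : Fin m → Fin r} {p : Fin (m+1)}
    (h : Ecur τ c' p) : p ≠ 0 := by
  obtain ⟨i, h1, -⟩ := h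
  rw [← h1]
  exact Fin.succ_ne_zero _

lemma key_stat_int (τ : Equiv.Perm (Fin m)) (c' : Fin m → Fin r) (p : Fin (m + 1)) (d : Fin r) :
    ((statf (Equiv.Perm.decomposeFin.symm (p, τ), (Fin.cons d c' : Fin (m+1) → Fin r)) : ℕ) : ℤ)
    = (statf (τ, c') : ℤ) + (if p ≠ 0 ∧ d = 0 then 1 else 0) - (if Ecur τ c' p then 1 else 0) := by
  have := key_stat τ c' p d
  split_ifs at this ⊢ <;> push_cast <;> omega

lemma sum_pd (τ : Equiv.Perm (Fin m)) (c' : Fin m → Fin r) (k : ℤ) :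
    ∑ p : Fin (m+1), ∑ d : Fin r,
      (if ((statf (Equiv.Perm.decomposeFin.symm (p, τ), (Fin.cons d c' : Fin (m+1) → Fin r)) : ℕ) : ℤ) = k
        then (1:ℤ) else 0)
    = (if (statf (τ,c') : ℤ) = k then ((k+1) + ((r:ℤ)-1) * ((m:ℤ)+1-k)) else 0)
      + (if (statf (τ,c') : ℤ) = k - 1 then ((m:ℤ)+1-k) else 0)
      + (if (statf (τ,c') : ℤ) = k + 1 then (k+1) * ((r:ℤ)-1) else 0) := by
  classical
  set J : ℤ := (statf (τ,c') : ℤ) with hJ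
  set cE : ℤ := (if J = k then 1 else 0) + ((r:ℤ)-1) * (if J - 1 = k then 1 else 0) with hcE
  set c0 : ℤ := (r:ℤ) * (if J = k then 1 else 0) with hc0
  set cN : ℤ := (if J + 1 = k then 1 else 0) + ((r:ℤ)-1) * (if J = k then 1 else 0) with hcN
  have hrw : ∀ (p : Fin (m+1)) (d : Fin r),
      (if ((statf (Equiv.Perm.decomposeFin.symm (p, τ), (Fin.cons d c' : Fin (m+1) → Fin r)) : ℕ) : ℤ) = k
        then (1:ℤ) else 0)
      = if J + (if p ≠ 0 ∧ d = 0 then 1 else 0) - (if Ecur τ c' p then 1 else 0) = k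
        then (1:ℤ) else 0 := by
    intro p d
    rw [key_stat_int τ c' p d]
  have hp : ∀ p : Fin (m+1), ∑ d : Fin r,
      (if ((statf (Equiv.Perm.decomposeFin.symm (p, τ), (Fin.cons d c' : Fin (m+1) → Fin r)) : ℕ) : ℤ) = k
        then (1:ℤ) else 0)
      = if Ecur τ c' p then cE else if p = 0 then c0 else cN := by
    intro p
    rw [Finset.sum_congr rfl (fun d _ => hrw p d)]
    by_cases hE : Ecur τ c' p
    · have hpne : p ≠ 0 := Ecur_ne_zero hE
      have hsum : ∀ d : Fin r,
          (if J + (if p ≠ 0 ∧ d = 0 then 1 else 0) - (if Ecur τ c' p then 1 else 0) = k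
            then (1:ℤ) else 0)
          = if d = 0 then (if J = k then (1:ℤ) else 0) else (if J - 1 = k then (1:ℤ) else 0) := by
        intro d
        by_cases hd : d = 0
        · rw [if_pos (show p ≠ 0 ∧ d = 0 from ⟨hpne, hd⟩), if_pos hE, if_pos hd,
            show J + 1 - (1:ℤ) = J from by ring]
        · rw [if_neg (show ¬(p ≠ 0 ∧ d = 0) from fun h => hd h.2), if_pos hE, if_neg hd,
            show J + 0 - (1:ℤ) = J - 1 from by ring]
      rw [Finset.sum_congr rfl (fun d _ => hsum d), sum_d, if_pos hE, hcE]
    · by_cases hp0 : p = 0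
      · have hsum : ∀ d : Fin r,
            (if J + (if p ≠ 0 ∧ d = 0 then 1 else 0) - (if Ecur τ c' p then 1 else 0) = k
              then (1:ℤ) else 0)
            = if J = k then (1:ℤ) else 0 := by
          intro d
          rw [if_neg hE, if_neg (show ¬(p ≠ 0 ∧ d = 0) from fun h => h.1 hp0),
            show J + 0 - (0:ℤ) = J from by ring]
        rw [Finset.sum_congr rfl (fun d _ => hsum d), Finset.sum_const, if_neg hE, if_pos hp0, hc0]
        simp only [Finset.card_univ, Fintype.card_fin, nsmul_eq_mul]
      · have hsum : ∀ d : Fin r,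
            (if J + (if p ≠ 0 ∧ d = 0 then 1 else 0) - (if Ecur τ c' p then 1 else 0) = k
              then (1:ℤ) else 0)
            = if d = 0 then (if J + 1 = k then (1:ℤ) else 0) else (if J = k then (1:ℤ) else 0) := by
          intro d
          by_cases hd : d = 0
          · rw [if_neg hE, if_pos (show p ≠ 0 ∧ d = 0 from ⟨hp0, hd⟩), if_pos hd,
              show J + 1 - (0:ℤ) = J + 1 from by ring]
          · rw [if_neg hE, if_neg (show ¬(p ≠ 0 ∧ d = 0) from fun h => hd h.2), if_neg hd,
              show J + 0 - (0:ℤ) = J from by ring]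
        rw [Finset.sum_congr rfl (fun d _ => hsum d), sum_d, if_neg hE, if_neg hp0, hcN]
  rw [Finset.sum_congr rfl (fun p _ => hp p)]
  have hsplit : ∀ p : Fin (m+1),
      (if Ecur τ c' p then cE else if p = 0 then c0 else cN)
      = cN + (if p = 0 then c0 - cN else 0) + (if Ecur τ c' p then cE - cN else 0) := by
    intro p
    by_cases hE : Ecur τ c' p
    · rw [if_pos hE, if_neg (Ecur_ne_zero hE), if_pos hE]; ring
    · rw [if_neg hE, if_neg hE]
      by_cases hp0 : p = 0
      · rw [if_pos hp0, if_pos hp0]; ring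
      · rw [if_neg hp0, if_neg hp0]; ring
  rw [Finset.sum_congr rfl (fun p _ => hsplit p)]
  rw [Finset.sum_add_distrib, Finset.sum_add_distrib, Finset.sum_const]
  rw [Finset.sum_ite_eq' univ (0 : Fin (m+1)) (fun _ => c0 - cN)]
  rw [Finset.sum_ite, Finset.sum_const, Finset.sum_const_zero, add_zero, cardE]
  simp only [Finset.card_univ, Fintype.card_fin, nsmul_eq_mul, if_pos (Finset.mem_univ _), ← hJ]
  rw [hcE, hc0, hcN]
  by_cases h1 : J = k
  · have e2 : ¬ (J = k - 1) := by omega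
    have e3 : ¬ (J = k + 1) := by omega
    have e4 : ¬ (J + 1 = k) := by omega
    have e5 : ¬ (J - 1 = k) := by omega
    simp only [if_pos h1, if_neg e2, if_neg e3, if_neg e4, if_neg e5]
    push_cast
    rw [h1]
    ring
  · by_cases h2 : J = k - 1
    · have e3 : ¬ (J = k + 1) := by omega
      have e4 : J + 1 = k := by omega
      have e5 : ¬ (J - 1 = k) := by omega
      simp only [if_neg h1, if_pos h2, if_neg e3, if_pos e4, if_neg e5]
      push_cast
      rw [show J = k - 1 from h2]
      ring
    · by_cases h3 : J = k + 1
      · have e4 : ¬ (J + 1 = k) := by omega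
        have e5 : J - 1 = k := by omega
        simp only [if_neg h1, if_neg h2, if_pos h3, if_neg e4, if_pos e5]
        push_cast
        rw [show J = k + 1 from h3]
        ring
      · have e4 : ¬ (J + 1 = k) := by omega
        have e5 : ¬ (J - 1 = k) := by omega
        simp only [if_neg h1, if_neg h2, if_neg h3, if_neg e4, if_neg e5]
        push_cast
        ring

def insEquiv (r m : ℕ) [NeZero r] :
    ((Equiv.Perm (Fin m) × (Fin m → Fin r)) × (Fin (m+1) × Fin r)) ≃
      (Equiv.Perm (Fin (m+1)) × (Fin (m+1) → Fin r)) where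
  toFun x := (Equiv.Perm.decomposeFin.symm (x.2.1, x.1.1), Fin.cons x.2.2 x.1.2)
  invFun y := (((Equiv.Perm.decomposeFin y.1).2, fun i => y.2 i.succ),
    ((Equiv.Perm.decomposeFin y.1).1, y.2 0))
  left_inv := by
    rintro ⟨⟨τ, c'⟩, ⟨p, d⟩⟩
    simp
  right_inv := by
    rintro ⟨σ, c⟩
    refine Prod.ext (by simp) ?_
    exact Fin.cons_self_tail c

lemma big_count (k : ℤ) :
    ((#(univ.filter fun sc : Equiv.Perm (Fin (m+1)) × (Fin (m+1) → Fin r) =>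
        ((statf sc : ℕ) : ℤ) = k) : ℕ) : ℤ)
    = ∑ sc' : Equiv.Perm (Fin m) × (Fin m → Fin r),
        ((if ((statf sc' : ℕ) : ℤ) = k then ((k+1) + ((r:ℤ)-1) * ((m:ℤ)+1-k)) else 0)
        + (if ((statf sc' : ℕ) : ℤ) = k - 1 then ((m:ℤ)+1-k) else 0)
        + (if ((statf sc' : ℕ) : ℤ) = k + 1 then (k+1) * ((r:ℤ)-1) else 0)) := by
  classical
  have h1 : ((#(univ.filter fun sc : Equiv.Perm (Fin (m+1)) × (Fin (m+1) → Fin r) =>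
      ((statf sc : ℕ) : ℤ) = k) : ℕ) : ℤ)
      = ∑ sc : Equiv.Perm (Fin (m+1)) × (Fin (m+1) → Fin r),
        if ((statf sc : ℕ) : ℤ) = k then (1:ℤ) else 0 := by
    rw [Finset.card_filter]
    push_cast
    rfl
  rw [h1, ← Equiv.sum_comp (insEquiv r m)
    (fun sc => if ((statf sc : ℕ) : ℤ) = k then (1:ℤ) else 0), Fintype.sum_prod_type]
  apply Finset.sum_congr rfl
  rintro ⟨τ, c'⟩ -
  rw [Fintype.sum_prod_type]
  exact sum_pd τ c' k

end Aux

/-- The recursion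
`d(r,n,k) = (n−k)·d(r,n−1,k−1) + (k+1+(r−1)(n−k))·d(r,n−1,k) + (k+1)(r−1)·d(r,n−1,k+1)`. -/
theorem dG_recursion (r n : ℕ) [NeZero r] (hn : 1 ≤ n) (k : ℤ) :
    (dG r n k : ℤ) =
      ((n : ℤ) - k) * dG r (n - 1) (k - 1) +
        (k + 1 + ((r : ℤ) - 1) * ((n : ℤ) - k)) * dG r (n - 1) k +
        (k + 1) * ((r : ℤ) - 1) * dG r (n - 1) (k + 1) := by
  classical
  obtain ⟨m, rfl⟩ : ∃ m, n = m + 1 := ⟨n - 1, (Nat.succ_pred_eq_of_pos hn).symm⟩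
  simp only [Nat.add_sub_cancel]
  rw [dG_eq_card (r := r) (n := m+1) k, big_count k]
  rw [Finset.sum_add_distrib, Finset.sum_add_distrib]
  have hsum : ∀ (K : ℤ) (C : ℤ),
      (∑ sc' : Equiv.Perm (Fin m) × (Fin m → Fin r),
        if ((statf sc' : ℕ) : ℤ) = K then C else 0) = C * (dG r m K) := by
    intro K C
    rw [Finset.sum_ite, Finset.sum_const, Finset.sum_const_zero, add_zero,
      ← dG_eq_card K, nsmul_eq_mul]
    ring
  rw [hsum k _, hsum (k-1) _, hsum (k+1) _]
  push_cast
  ring
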